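/- arXiv:math-ph/0601049 — 2 statements merged into one kernel-verified Lean document; each statement's English description precedes it below -/
import Mathlib

section
/- Let T be the integral operator on L²(ℝ₊) with kernel 𝒯(x,y) = e^{-|x-y|}. For every ψ ∈ L²(ℝ₊), the image function (Tψ)(x) = ∫₀^∞ e^{-|x-y|} ψ(y) dy is twice differentiable and satisfies the differential equation (Tψ)'' = Tψ − 2ψ. -/
open MeasureTheory Set

open Filter Metric
open scoped Interval

lemma uIoc_subset_closedBall' (x y : ℝ) : Ι x y ⊆ closedBall x |y - x| := by
  intro t ht
  rw [Set.mem_uIoc] at ht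
  simp only [mem_closedBall, Real.dist_eq]
  rcases ht with ⟨h1, h2⟩ | ⟨h1, h2⟩
  · rw [abs_of_nonneg (by linarith), abs_of_nonneg (by linarith)]; linarith
  · rw [abs_of_nonpos (by linarith), abs_of_nonpos (by linarith)]; linarith

lemma ae_hasDerivAt_primitive (f : ℝ → ℝ) (hf : LocallyIntegrable f volume) :
    ∀ᵐ x : ℝ, HasDerivAt (fun y => ∫ t in (0:ℝ)..y, f t) (f x) x := by
  filter_upwards [IsUnifLocDoublingMeasure.ae_tendsto_average_norm_sub volume hf 1] with x hx
  rw [hasDerivAt_iff_tendsto_slope, tendsto_iff_norm_sub_tendsto_zero]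
  have hδ : Tendsto (fun y : ℝ => |y - x|) (nhdsWithin x {x}ᶜ) (nhdsWithin 0 (Ioi 0)) := by
    rw [tendsto_nhdsWithin_iff]
    constructor
    · apply tendsto_nhdsWithin_of_tendsto_nhds
      have : Tendsto (fun y : ℝ => |y - x|) (nhds x) (nhds |x - x|) :=
        ((continuous_id.sub continuous_const).abs).continuousAt
      simpa using this
    · exact eventually_mem_nhdsWithin.mono fun y hy => abs_pos.2 (sub_ne_zero.2 hy)
  have hev : ∀ᶠ y : ℝ in nhdsWithin x {x}ᶜ, x ∈ closedBall x (1 * |y - x|) := by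
    filter_upwards with y
    simp [mem_closedBall, abs_nonneg]
  have htend := hx (fun _ : ℝ => x) (fun y => |y - x|) hδ hev
  have htend2 : Tendsto (fun y : ℝ => 2 * ⨍ t in closedBall x |y - x|, ‖f t - f x‖)
      (nhdsWithin x {x}ᶜ) (nhds 0) := by
    simpa using htend.const_mul 2
  apply squeeze_zero' (by filter_upwards with y using norm_nonneg _) _ htend2
  filter_upwards [eventually_mem_nhdsWithin] with y (hy : y ≠ x)
  have hyx : (0:ℝ) < |y - x| := abs_pos.2 (sub_ne_zero.2 hy)
  have hint : ∀ a b : ℝ, IntervalIntegrable f volume a b := fun a b =>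
    intervalIntegrable_iff.2 ((hf.integrableOn_isCompact isCompact_uIcc).mono_set uIoc_subset_uIcc)
  have hBsub : (∫ t in (0:ℝ)..y, f t) - ∫ t in (0:ℝ)..x, f t = ∫ t in x..y, f t :=
    intervalIntegral.integral_interval_sub_left (hint 0 y) (hint 0 x)
  have hsub : ∫ t in x..y, (f t - f x) = (∫ t in x..y, f t) - (y - x) * f x := by
    rw [intervalIntegral.integral_sub (hint x y) intervalIntegrable_const,
      intervalIntegral.integral_const, smul_eq_mul]
  have hslope : slope (fun y => ∫ t in (0:ℝ)..y, f t) x y - f x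
      = (y - x)⁻¹ * ∫ t in x..y, (f t - f x) := by
    rw [slope_def_field, hBsub, hsub]
    have hne : y - x ≠ 0 := sub_ne_zero.2 hy
    field_simp
  rw [hslope]
  have hIcb : IntegrableOn (fun t => ‖f t - f x‖) (closedBall x |y - x|) volume := by
    exact ((hf.integrableOn_isCompact (isCompact_closedBall x _)).sub
      (integrableOn_const measure_closedBall_lt_top.ne)).norm
  have h1 : ‖∫ t in x..y, (f t - f x)‖ ≤ ∫ t in Ι x y, ‖f t - f x‖ :=
    intervalIntegral.norm_integral_le_integral_norm_uIoc
  have h2 : ∫ t in Ι x y, ‖f t - f x‖ ≤ ∫ t in closedBall x |y - x|, ‖f t - f x‖ := by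
    apply setIntegral_mono_set hIcb
    · filter_upwards with t using norm_nonneg _
    · exact HasSubset.Subset.eventuallyLE (uIoc_subset_closedBall' x y)
  have hvol : (volume (closedBall x |y - x|)).toReal = 2 * |y - x| := by
    rw [Real.volume_closedBall, ENNReal.toReal_ofReal (by positivity)]
  have h3 : ∫ t in closedBall x |y - x|, ‖f t - f x‖
      = 2 * |y - x| * ⨍ t in closedBall x |y - x|, ‖f t - f x‖ := by
    rw [setAverage_eq, smul_eq_mul, measureReal_def, hvol, ← mul_assoc, mul_inv_cancel₀ (by positivity), one_mul]
  calc ‖(y - x)⁻¹ * ∫ t in x..y, (f t - f x)‖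
      = |y - x|⁻¹ * ‖∫ t in x..y, (f t - f x)‖ := by
        rw [norm_mul, norm_inv, Real.norm_eq_abs, Real.norm_eq_abs]
    _ ≤ |y - x|⁻¹ * (2 * |y - x| * ⨍ t in closedBall x |y - x|, ‖f t - f x‖) := by
        apply mul_le_mul_of_nonneg_left _ (by positivity)
        exact le_trans h1 (le_trans h2 (le_of_eq h3))
    _ = 2 * ⨍ t in closedBall x |y - x|, ‖f t - f x‖ := by
        field_simp


/-- The integral operator `T` on `L²(ℝ₊)` with kernel `e^{-|x-y|}`: for every
`ψ ∈ L²(ℝ₊)`, the image function `(Tψ)(x) = ∫₀^∞ e^{-|x-y|} ψ(y) dy` is twice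
differentiable (a.e.) and satisfies `(Tψ)'' = Tψ − 2ψ`. -/
theorem stmt_0 (ψ : ℝ → ℝ)
    (hψ : MemLp ψ 2 (volume.restrict (Ioi (0 : ℝ))))
    (F : ℝ → ℝ)
    (hF : ∀ x : ℝ, F x = ∫ y in Ioi (0 : ℝ), Real.exp (-|x - y|) * ψ y) :
    ∃ F' F'' : ℝ → ℝ,
      (∀ᵐ x ∂(volume.restrict (Ioi (0 : ℝ))), HasDerivAt F (F' x) x) ∧
      (∀ᵐ x ∂(volume.restrict (Ioi (0 : ℝ))), HasDerivAt F' (F'' x) x) ∧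
      (∀ᵐ x ∂(volume.restrict (Ioi (0 : ℝ))), F'' x = F x - 2 * ψ x) := by
  have hψm : AEStronglyMeasurable ψ (volume.restrict (Ioi (0:ℝ))) := hψ.aestronglyMeasurable
  set g : ℝ → ℝ := (Ioi (0:ℝ)).indicator (fun y => Real.exp y * ψ y) with hgdef
  set h : ℝ → ℝ := (Ioi (0:ℝ)).indicator (fun y => Real.exp (-y) * ψ y) with hhdef
  -- exp (-y) is in L² on (0, ∞)
  have hexp2 : MemLp (fun y : ℝ => Real.exp (-y)) 2 (volume.restrict (Ioi (0:ℝ))) := by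
    rw [memLp_two_iff_integrable_sq
      (Continuous.aestronglyMeasurable (continuous_neg.rexp))]
    have heq : (fun y : ℝ => Real.exp (-y) ^ 2) = fun y => Real.exp (-2*y) := by
      funext y; rw [sq, ← Real.exp_add]; ring_nf
    have h2 : IntegrableOn (fun y : ℝ => Real.exp (-2*y)) (Ioi 0) volume :=
      exp_neg_integrableOn_Ioi (b := 2) 0 two_pos
    exact heq ▸ h2
  -- exp(-y) ψ y is integrable on (0, ∞)
  have hhint : IntegrableOn (fun y => Real.exp (-y) * ψ y) (Ioi (0:ℝ)) volume := by
    have hmem : MemLp ((fun y : ℝ => Real.exp (-y)) • ψ) 1 (volume.restrict (Ioi (0:ℝ))) :=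
      MemLp.smul hψ hexp2 (hpqr := ⟨by norm_num [ENNReal.inv_two_add_inv_two]⟩)
    exact memLp_one_iff_integrable.1 hmem
  have hh : Integrable h volume := by
    rw [hhdef, integrable_indicator_iff measurableSet_Ioi]; exact hhint
  -- g is locally integrable
  have hg : LocallyIntegrable g volume := by
    rw [locallyIntegrable_iff]
    intro k hk
    obtain ⟨R, hR⟩ := hk.isBounded.subset_closedBall 0
    apply IntegrableOn.mono_set _ hR
    rw [hgdef, IntegrableOn, integrable_indicator_iff measurableSet_Ioi, IntegrableOn,
      Measure.restrict_restrict measurableSet_Ioi]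
    set μ' := volume.restrict (Ioi 0 ∩ closedBall (0:ℝ) R) with hμ'
    haveI : IsFiniteMeasure μ' := ⟨by
      rw [hμ', Measure.restrict_apply_univ]
      exact lt_of_le_of_lt (measure_mono inter_subset_right) measure_closedBall_lt_top⟩
    have hμle : μ' ≤ volume.restrict (Ioi 0) :=
      Measure.restrict_mono inter_subset_left le_rfl
    have hψ' : MemLp ψ 2 μ' := hψ.mono_measure hμle
    have hψint : Integrable ψ μ' := hψ'.integrable one_le_two
    apply Integrable.mono (hψint.const_mul (Real.exp R))
      (Real.continuous_exp.aestronglyMeasurable.mul hψ'.aestronglyMeasurable)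
    filter_upwards [ae_restrict_mem (measurableSet_Ioi.inter measurableSet_closedBall)]
      with y hy
    have hyR : y ≤ R := by
      have h2 := hy.2
      rw [mem_closedBall, Real.dist_eq, sub_zero] at h2
      exact (abs_le.1 h2).2
    simp only [Pi.mul_apply, norm_mul, Real.norm_eq_abs, Real.abs_exp]
    exact mul_le_mul_of_nonneg_right (Real.exp_le_exp.2 hyR) (abs_nonneg _)
  -- the kernel integrand is integrable on (0, ∞) for every x
  have hker : ∀ x : ℝ, IntegrableOn (fun y => Real.exp (-|x - y|) * ψ y) (Ioi (0:ℝ)) volume := by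
    intro x
    apply Integrable.mono (hhint.const_mul (Real.exp x))
    · exact ((Real.continuous_exp.comp
        ((continuous_const.sub continuous_id).abs.neg)).aestronglyMeasurable).mul hψm
    · filter_upwards with y
      have e1 : ‖Real.exp (-|x - y|) * ψ y‖ = Real.exp (-|x - y|) * ‖ψ y‖ := by
        rw [norm_mul, Real.norm_eq_abs, Real.abs_exp]
      have e2 : ‖Real.exp x * (Real.exp (-y) * ψ y)‖
          = Real.exp x * (Real.exp (-y) * ‖ψ y‖) := by
        rw [norm_mul, norm_mul, Real.norm_eq_abs (Real.exp x), Real.norm_eq_abs (Real.exp (-y)),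
          Real.abs_exp, Real.abs_exp]
      rw [e1, e2, ← mul_assoc, ← Real.exp_add]
      apply mul_le_mul_of_nonneg_right _ (norm_nonneg _)
      apply Real.exp_le_exp.2
      have := neg_abs_le (x - y)
      linarith
  -- the splitting of F
  set Hc : ℝ := ∫ y in Ioi (0:ℝ), Real.exp (-y) * ψ y with hHcdef
  set G : ℝ → ℝ := fun x => ∫ t in (0:ℝ)..x, g t with hGdef
  set B : ℝ → ℝ := fun x => ∫ t in (0:ℝ)..x, h t with hBdef
  set H : ℝ → ℝ := fun x => Hc - B x with hHdef
  have hsplitint : ∀ {φ : ℝ → ℝ}, IntegrableOn φ (Ioi (0:ℝ)) volume → ∀ x ∈ Ioi (0:ℝ),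
      ∫ y in Ioi (0:ℝ), φ y = (∫ y in Ioc (0:ℝ) x, φ y) + ∫ y in Ioi x, φ y := by
    intro φ hφ x hx
    rw [← Ioc_union_Ioi_eq_Ioi (le_of_lt hx)]
    apply setIntegral_union _ measurableSet_Ioi
    · exact hφ.mono_set Ioc_subset_Ioi_self
    · exact hφ.mono_set (Ioi_subset_Ioi (le_of_lt hx))
    · rw [Set.disjoint_left]
      rintro t ⟨_, ht2⟩ (ht3 : x < t)
      exact absurd ht2 (not_le.2 ht3)
  have hGeq : ∀ x ∈ Ioi (0:ℝ), G x = ∫ y in Ioc (0:ℝ) x, Real.exp y * ψ y := by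
    intro x hx
    rw [hGdef]
    simp only
    rw [intervalIntegral.integral_of_le (le_of_lt hx)]
    apply setIntegral_congr_fun measurableSet_Ioc
    intro y hy
    exact Set.indicator_of_mem (Ioc_subset_Ioi_self hy) _
  have hBeq : ∀ x ∈ Ioi (0:ℝ), B x = ∫ y in Ioc (0:ℝ) x, Real.exp (-y) * ψ y := by
    intro x hx
    rw [hBdef]
    simp only
    rw [intervalIntegral.integral_of_le (le_of_lt hx)]
    apply setIntegral_congr_fun measurableSet_Ioc
    intro y hy
    exact Set.indicator_of_mem (Ioc_subset_Ioi_self hy) _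
  have hHeq : ∀ x ∈ Ioi (0:ℝ), H x = ∫ y in Ioi x, Real.exp (-y) * ψ y := by
    intro x hx
    rw [hHdef]
    simp only
    rw [hBeq x hx, hHcdef, hsplitint hhint x hx]
    ring
  have hsplit : ∀ x ∈ Ioi (0:ℝ), F x = Real.exp (-x) * G x + Real.exp x * H x := by
    intro x hx
    rw [hF, hsplitint (hker x) x hx, hGeq x hx, hHeq x hx]
    have c1 : ∫ y in Ioc (0:ℝ) x, Real.exp (-|x - y|) * ψ y
        = ∫ y in Ioc (0:ℝ) x, Real.exp (-x) * (Real.exp y * ψ y) := by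
      apply setIntegral_congr_fun measurableSet_Ioc
      intro y hy
      simp only
      rw [abs_of_nonneg (by linarith [hy.2] : (0:ℝ) ≤ x - y),
        show -(x - y) = -x + y by ring, Real.exp_add]
      ring
    have c2 : ∫ y in Ioi x, Real.exp (-|x - y|) * ψ y
        = ∫ y in Ioi x, Real.exp x * (Real.exp (-y) * ψ y) := by
      apply setIntegral_congr_fun measurableSet_Ioi
      intro y hy
      simp only
      rw [abs_of_nonpos (by simp only [mem_Ioi] at hy; linarith : x - y ≤ 0),
        show -(-(x - y)) = x + -y by ring, Real.exp_add]
      ring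
    rw [c1, c2, integral_const_mul, integral_const_mul]
  -- derivatives
  refine ⟨fun x => Real.exp x * H x - Real.exp (-x) * G x, fun x => F x - 2 * ψ x, ?_, ?_, ?_⟩
  · filter_upwards [ae_restrict_mem measurableSet_Ioi,
      ae_restrict_of_ae (ae_hasDerivAt_primitive g hg),
      ae_restrict_of_ae (ae_hasDerivAt_primitive h hh.locallyIntegrable)] with x hx hgx hhx
    show HasDerivAt F (Real.exp x * H x - Real.exp (-x) * G x) x
    have hE1 : HasDerivAt (fun y : ℝ => Real.exp (-y)) (-Real.exp (-x)) x := by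
      simpa using (hasDerivAt_neg x).exp
    have hE2 : HasDerivAt Real.exp (Real.exp x) x := Real.hasDerivAt_exp x
    have hGx : HasDerivAt G (g x) x := hgx
    have hHx : HasDerivAt H (-(h x)) x := by
      rw [hHdef]
      simpa using (HasDerivAt.const_sub Hc hhx)
    have hprod := (hE1.mul hGx).add (hE2.mul hHx)
    have hgx0 : g x = Real.exp x * ψ x := Set.indicator_of_mem hx _
    have hhx0 : h x = Real.exp (-x) * ψ x := Set.indicator_of_mem hx _
    have hFt : HasDerivAt (fun y => Real.exp (-y) * G y + Real.exp y * H y)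
        (Real.exp x * H x - Real.exp (-x) * G x) x := by
      refine hprod.congr_deriv ?_
      rw [hgx0, hhx0]
      ring
    apply hFt.congr_of_eventuallyEq
    filter_upwards [isOpen_Ioi.mem_nhds hx] with y hy
    exact hsplit y hy
  · filter_upwards [ae_restrict_mem measurableSet_Ioi,
      ae_restrict_of_ae (ae_hasDerivAt_primitive g hg),
      ae_restrict_of_ae (ae_hasDerivAt_primitive h hh.locallyIntegrable)] with x hx hgx hhx
    show HasDerivAt (fun x => Real.exp x * H x - Real.exp (-x) * G x) (F x - 2 * ψ x) x
    have hE1 : HasDerivAt (fun y : ℝ => Real.exp (-y)) (-Real.exp (-x)) x := by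
      simpa using (hasDerivAt_neg x).exp
    have hE2 : HasDerivAt Real.exp (Real.exp x) x := Real.hasDerivAt_exp x
    have hGx : HasDerivAt G (g x) x := hgx
    have hHx : HasDerivAt H (-(h x)) x := by
      rw [hHdef]
      simpa using (HasDerivAt.const_sub Hc hhx)
    have hgx0 : g x = Real.exp x * ψ x := Set.indicator_of_mem hx _
    have hhx0 : h x = Real.exp (-x) * ψ x := Set.indicator_of_mem hx _
    have hprod := (hE2.mul hHx).sub (hE1.mul hGx)
    refine hprod.congr_deriv ?_
    rw [hgx0, hhx0, hsplit x hx]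
    have e1 : Real.exp x * Real.exp (-x) = 1 := by rw [← Real.exp_add]; simp
    have e2 : Real.exp (-x) * Real.exp x = 1 := by rw [← Real.exp_add]; simp
    linear_combination -ψ x * e1 - ψ x * e2
  · filter_upwards with x using rfl
end

section
/- For ω > 0 let b = arccot(ω) and ψ_ω(x) = cos(ωx − b). Then for all x ≥ 0 one has ∫₀^∞ e^{-|x-y|} ψ_ω(y) dy = (2/(1+ω²)) ψ_ω(x). That is, ψ_ω is a bounded generalized eigenfunction of the kernel e^{-|x-y|} with eigenvalue 2/(1+ω²). -/
open MeasureTheory Set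

private lemma hasDerivAt_F (ω b : ℝ) (y : ℝ) :
    HasDerivAt (fun y => Real.exp y * (Real.cos (ω*y - b) + ω * Real.sin (ω*y - b)) / (1+ω^2))
      (Real.exp y * Real.cos (ω*y - b) * (1+ω^2) / (1+ω^2)) y := by
  have h2 : HasDerivAt (fun y : ℝ => ω*y - b) ω y := by
    simpa using ((hasDerivAt_id y).const_mul ω).sub_const b
  have hcos : HasDerivAt (fun y : ℝ => Real.cos (ω*y - b)) (-Real.sin (ω*y-b) * ω) y :=
    h2.cos
  have hsin : HasDerivAt (fun y : ℝ => Real.sin (ω*y - b)) (Real.cos (ω*y-b) * ω) y :=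
    h2.sin
  have := ((Real.hasDerivAt_exp y).mul (hcos.add (hsin.const_mul ω))).div_const (1+ω^2)
  refine this.congr_deriv ?_
  simp only [Pi.add_apply, Pi.neg_apply]; ring

private lemma hasDerivAt_G (ω b : ℝ) (y : ℝ) :
    HasDerivAt (fun y => Real.exp (-y) * (-Real.cos (ω*y - b) + ω * Real.sin (ω*y - b)) / (1+ω^2))
      (Real.exp (-y) * Real.cos (ω*y - b) * (1+ω^2) / (1+ω^2)) y := by
  have h2 : HasDerivAt (fun y : ℝ => ω*y - b) ω y := by
    simpa using ((hasDerivAt_id y).const_mul ω).sub_const b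
  have hcos : HasDerivAt (fun y : ℝ => Real.cos (ω*y - b)) (-Real.sin (ω*y-b) * ω) y :=
    h2.cos
  have hsin : HasDerivAt (fun y : ℝ => Real.sin (ω*y - b)) (Real.cos (ω*y-b) * ω) y :=
    h2.sin
  have hexp : HasDerivAt (fun y : ℝ => Real.exp (-y)) (-Real.exp (-y)) y := by
    simpa using (hasDerivAt_neg y).exp
  have := (hexp.mul ((hcos.neg).add (hsin.const_mul ω))).div_const (1+ω^2)
  refine this.congr_deriv ?_
  simp only [Pi.add_apply, Pi.neg_apply]; ring

/-- For `ω > 0` let `b = arccot ω = π/2 − arctan ω` and `ψ_ω(x) = cos(ωx − b)`.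
Then `ψ_ω` is bounded and for all `x ≥ 0`,
`∫₀^∞ e^{-|x-y|} ψ_ω(y) dy = (2/(1+ω²)) ψ_ω(x)`. -/
theorem stmt_1 (ω : ℝ) (hω : 0 < ω) :
    let b : ℝ := Real.pi / 2 - Real.arctan ω
    let ψ : ℝ → ℝ := fun x => Real.cos (ω * x - b)
    (∀ x : ℝ, |ψ x| ≤ 1) ∧
    (∀ x : ℝ, 0 ≤ x →
      ∫ y in Ioi (0 : ℝ), Real.exp (-|x - y|) * ψ y
        = (2 / (1 + ω ^ 2)) * ψ x) := by
  intro b ψ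
  have hden : (0:ℝ) < 1 + ω^2 := by positivity
  have hden' : (1 + ω^2 : ℝ) ≠ 0 := ne_of_gt hden
  constructor
  · intro x; exact Real.abs_cos_le_one _
  intro x hx
  -- trig facts about b
  have hsqrt : (0:ℝ) < Real.sqrt (1 + ω^2) := Real.sqrt_pos.2 hden
  have hcb : Real.cos b = ω / Real.sqrt (1 + ω^2) := by
    show Real.cos (Real.pi/2 - Real.arctan ω) = _
    rw [Real.cos_pi_div_two_sub, Real.sin_arctan]
  have hsb : Real.sin b = 1 / Real.sqrt (1 + ω^2) := by
    show Real.sin (Real.pi/2 - Real.arctan ω) = _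
    rw [Real.sin_pi_div_two_sub, Real.cos_arctan]
  have hb0 : Real.cos b - ω * Real.sin b = 0 := by
    rw [hcb, hsb]; field_simp; ring
  -- split domain
  have hsplit : (Ioi (0:ℝ)) = Ioc 0 x ∪ Ioi x := (Ioc_union_Ioi_eq_Ioi hx).symm
  have hcont : Continuous fun y => Real.exp (-|x - y|) * ψ y := by
    fun_prop
  have hint2 : IntegrableOn (fun y => Real.exp (-|x - y|) * ψ y) (Ioi x) := by
    have hg : IntegrableOn (fun y => Real.exp x * Real.exp (-y)) (Ioi x) := by
      have := (exp_neg_integrableOn_Ioi x (one_pos)).const_mul (Real.exp x)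
      simp only [neg_one_mul] at this; exact this
    refine Integrable.mono' hg hcont.aestronglyMeasurable.restrict ?_
    filter_upwards [ae_restrict_mem measurableSet_Ioi] with y hy
    have hy' : x - y < 0 := by simp at hy; linarith
    rw [abs_of_neg hy']
    have : Real.exp (-(-(x - y))) * |ψ y| ≤ Real.exp (-(-(x-y))) * 1 :=
      mul_le_mul_of_nonneg_left (Real.abs_cos_le_one _) (Real.exp_pos _).le
    calc ‖Real.exp (-(-(x - y))) * ψ y‖ = Real.exp (-(-(x-y))) * |ψ y| := by
          rw [Real.norm_eq_abs, abs_mul, Real.abs_exp]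
      _ ≤ Real.exp (-(-(x-y))) * 1 := this
      _ = Real.exp x * Real.exp (-y) := by rw [← Real.exp_add]; ring_nf
  have hint1 : IntegrableOn (fun y => Real.exp (-|x - y|) * ψ y) (Ioc 0 x) :=
    hcont.integrableOn_Ioc
  rw [hsplit, setIntegral_union (Ioc_disjoint_Ioi le_rfl) measurableSet_Ioi hint1 hint2]
  -- first piece
  have e1 : ∫ y in Ioc (0:ℝ) x, Real.exp (-|x - y|) * ψ y
      = Real.exp (-x) * ∫ y in (0:ℝ)..x, Real.exp y * Real.cos (ω*y - b) := by
    rw [intervalIntegral.integral_of_le hx, ← integral_const_mul]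
    refine setIntegral_congr_fun measurableSet_Ioc (fun y hy => ?_)
    have : (0:ℝ) ≤ x - y := by simp at hy; linarith
    rw [abs_of_nonneg this]
    show Real.exp (-(x - y)) * Real.cos (ω * y - b) = _
    rw [show -(x-y) = -x + y by ring, Real.exp_add]
    ring
  have e2 : ∫ y in Ioi x, Real.exp (-|x - y|) * ψ y
      = Real.exp x * ∫ y in Ioi x, Real.exp (-y) * Real.cos (ω*y - b) := by
    rw [← integral_const_mul]
    refine setIntegral_congr_fun measurableSet_Ioi (fun y hy => ?_)
    have : x - y < 0 := by simp at hy; linarith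
    rw [abs_of_neg this]
    show Real.exp (-(-(x - y))) * Real.cos (ω * y - b) = _
    rw [show -(-(x-y)) = x + -y by ring, Real.exp_add]
    ring
  -- evaluate interval integral via FTC
  have hF : ∀ y : ℝ, HasDerivAt
      (fun y => Real.exp y * (Real.cos (ω*y - b) + ω * Real.sin (ω*y - b)) / (1+ω^2))
      (Real.exp y * Real.cos (ω*y - b)) y := by
    intro y
    have := hasDerivAt_F ω b y
    rwa [mul_div_assoc, div_self hden', mul_one] at this
  have hG : ∀ y : ℝ, HasDerivAt
      (fun y => Real.exp (-y) * (-Real.cos (ω*y - b) + ω * Real.sin (ω*y - b)) / (1+ω^2))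
      (Real.exp (-y) * Real.cos (ω*y - b)) y := by
    intro y
    have := hasDerivAt_G ω b y
    rwa [mul_div_assoc, div_self hden', mul_one] at this
  have v1 : ∫ y in (0:ℝ)..x, Real.exp y * Real.cos (ω*y - b)
      = Real.exp x * (Real.cos (ω*x - b) + ω * Real.sin (ω*x - b)) / (1+ω^2)
        - Real.exp 0 * (Real.cos (ω*0 - b) + ω * Real.sin (ω*0 - b)) / (1+ω^2) := by
    refine intervalIntegral.integral_eq_sub_of_hasDerivAt (fun y _ => hF y) ?_
    exact (Continuous.intervalIntegrable (by fun_prop) 0 x)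
  have hGint : IntegrableOn (fun y => Real.exp (-y) * Real.cos (ω*y - b)) (Ioi x) := by
    have hg : IntegrableOn (fun y : ℝ => Real.exp (-y)) (Ioi x) := by
      have := exp_neg_integrableOn_Ioi x (one_pos)
      simpa [neg_one_mul] using this
    refine Integrable.mono' hg ((Continuous.mul (Real.continuous_exp.comp continuous_neg) (Real.continuous_cos.comp (by fun_prop))).aestronglyMeasurable.restrict) ?_
    filter_upwards with y
    calc ‖Real.exp (-y) * Real.cos (ω*y - b)‖ = Real.exp (-y) * |Real.cos (ω*y-b)| := by
          rw [Real.norm_eq_abs, abs_mul, Real.abs_exp]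
      _ ≤ Real.exp (-y) * 1 := mul_le_mul_of_nonneg_left (Real.abs_cos_le_one _) (Real.exp_pos _).le
      _ = Real.exp (-y) := mul_one _
  have hGtend : Filter.Tendsto
      (fun y => Real.exp (-y) * (-Real.cos (ω*y - b) + ω * Real.sin (ω*y - b)) / (1+ω^2))
      Filter.atTop (nhds 0) := by
    apply squeeze_zero_norm (a := fun y => Real.exp (-y) * (1 + ω) / (1+ω^2)) (f := fun y => Real.exp (-y) * (-Real.cos (ω*y - b) + ω * Real.sin (ω*y - b)) / (1+ω^2))
    · intro y
      rw [Real.norm_eq_abs, abs_div, abs_of_pos hden, abs_mul, Real.abs_exp]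
      gcongr
      calc |(-Real.cos (ω*y - b) + ω * Real.sin (ω*y - b))|
          ≤ |(-Real.cos (ω*y - b))| + |ω * Real.sin (ω*y - b)| := abs_add_le _ _
        _ ≤ 1 + ω := by
            rw [abs_neg, abs_mul, abs_of_pos hω]
            have h1 := Real.abs_cos_le_one (ω*y - b)
            have h2 := Real.abs_sin_le_one (ω*y - b)
            nlinarith
    · have : Filter.Tendsto (fun y : ℝ => Real.exp (-y)) Filter.atTop (nhds 0) :=
        Real.tendsto_exp_neg_atTop_nhds_zero.comp Filter.tendsto_id
      have := (this.mul_const (1+ω)).div_const (1+ω^2)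
      simpa using this
  have v2 : ∫ y in Ioi x, Real.exp (-y) * Real.cos (ω*y - b)
      = 0 - Real.exp (-x) * (-Real.cos (ω*x - b) + ω * Real.sin (ω*x - b)) / (1+ω^2) := by
    refine integral_Ioi_of_hasDerivAt_of_tendsto ?_ (fun y _ => hG y) hGint hGtend
    have hlin : Continuous fun y : ℝ => ω*y - b := (continuous_const.mul continuous_id).sub continuous_const
    exact Continuous.continuousWithinAt (Continuous.div_const (((Real.continuous_exp.comp continuous_neg).mul ((Real.continuous_cos.comp hlin).neg.add (continuous_const.mul (Real.continuous_sin.comp hlin))))) _)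
  rw [e1, e2, v1, v2]
  have hz : Real.cos (ω*0 - b) + ω * Real.sin (ω*0 - b) = 0 := by
    simp only [mul_zero, zero_sub, Real.cos_neg, Real.sin_neg]
    linarith [hb0]
  rw [hz]
  have hxx : Real.exp (-x) * Real.exp x = 1 := by rw [← Real.exp_add]; simp
  have hxx' : Real.exp x * Real.exp (-x) = 1 := by rw [← Real.exp_add]; simp
  show Real.exp (-x) * (Real.exp x * (Real.cos (ω*x-b) + ω*Real.sin (ω*x-b))/(1+ω^2)
      - Real.exp 0 * 0 / (1+ω^2))
    + Real.exp x * (0 - Real.exp (-x) * (-Real.cos (ω*x-b) + ω*Real.sin (ω*x-b))/(1+ω^2))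
    = 2/(1+ω^2) * Real.cos (ω*x - b)
  calc Real.exp (-x) * (Real.exp x * (Real.cos (ω*x-b) + ω*Real.sin (ω*x-b))/(1+ω^2)
      - Real.exp 0 * 0 / (1+ω^2))
    + Real.exp x * (0 - Real.exp (-x) * (-Real.cos (ω*x-b) + ω*Real.sin (ω*x-b))/(1+ω^2))
      = (Real.exp (-x) * Real.exp x) * ((Real.cos (ω*x-b) + ω*Real.sin (ω*x-b))/(1+ω^2))
        - (Real.exp x * Real.exp (-x)) * ((-Real.cos (ω*x-b) + ω*Real.sin (ω*x-b))/(1+ω^2)) := by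
        ring
    _ = 2/(1+ω^2) * Real.cos (ω*x - b) := by
        rw [hxx, hxx']; field_simp; ring
end
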